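/- Let N ≥ 1, σ > 0, ψ_m > 0, and let x_1, …, x_N be unit vectors in ℝ³, pairwise satisfying x_a ≠ −x_b, and let v_1, …, v_N ∈ ℝ³. Fix an index i with ‖v_i‖ ≥ ‖v_k‖ for all k, and suppose ψ_{ik} ≥ ψ_m for all k, where ψ_{ik} ≥ 0 are given weights. Then 2 Σ_{k=1}^N (ψ_{ik}/N) (⟨R_{x_k→x_i}(v_k), v_i⟩ − ‖v_i‖²) + (2σ/N) Σ_{k=1}^N ⟨x_k − x_i, v_i⟩ ≤ ψ_m · (1/N) Σ_{k=1}^N ‖v_k‖² − (ψ_m/2) ‖v_i‖² + (2σ²/ψ_m) · (1/N) Σ_{k=1}^N ‖x_k − x_i‖². -/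

import Mathlib

open Matrix Set
open scoped BigOperators

noncomputable section

/-- The Euclidean norm on `ℝ³`, realized as `Fin 3 → ℝ`. -/
def enorm3 (a : Fin 3 → ℝ) : ℝ := Real.sqrt (a ⬝ᵥ a)

/-- The cross product on `ℝ³`. -/
def cross3 (a b : Fin 3 → ℝ) : Fin 3 → ℝ :=
  ![a 1 * b 2 - a 2 * b 1, a 2 * b 0 - a 0 * b 2, a 0 * b 1 - a 1 * b 0]

/-- The unit vector `u = (z₁ × z₂)/‖z₁ × z₂‖`. -/
def uvec3 (z₁ z₂ : Fin 3 → ℝ) : Fin 3 → ℝ := (enorm3 (cross3 z₁ z₂))⁻¹ • cross3 z₁ z₂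

/-- The rotation matrix `R(z₁,z₂) = ⟨z₁,z₂⟩ I + z₂ z₁ᵀ − z₁ z₂ᵀ + (1 − ⟨z₁,z₂⟩) u uᵀ`. -/
def rotMatrix (z₁ z₂ : Fin 3 → ℝ) : Matrix (Fin 3) (Fin 3) ℝ :=
  (z₁ ⬝ᵥ z₂) • (1 : Matrix (Fin 3) (Fin 3) ℝ)
    + vecMulVec z₂ z₁ - vecMulVec z₁ z₂
    + (1 - z₁ ⬝ᵥ z₂) • vecMulVec (uvec3 z₁ z₂) (uvec3 z₁ z₂)

/-- `R_{z₁→z₂}(v)`, with the convention `R_{z→z} = I`. -/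
def rotApply (z₁ z₂ v : Fin 3 → ℝ) : Fin 3 → ℝ :=
  if z₁ = z₂ then v else (rotMatrix z₁ z₂).mulVec v

/- ### Auxiliary lemmas -/

lemma dot_self_nonneg3 (a : Fin 3 → ℝ) : 0 ≤ a ⬝ᵥ a := by
  have : a ⬝ᵥ a = a 0 * a 0 + a 1 * a 1 + a 2 * a 2 := by
    simp [dotProduct, Fin.sum_univ_three]
  rw [this]; nlinarith [sq_nonneg (a 0), sq_nonneg (a 1), sq_nonneg (a 2)]

lemma enorm3_sq (a : Fin 3 → ℝ) : (enorm3 a)^2 = a ⬝ᵥ a :=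
  Real.sq_sqrt (dot_self_nonneg3 a)

lemma enorm3_nonneg (a : Fin 3 → ℝ) : 0 ≤ enorm3 a := Real.sqrt_nonneg _

lemma dot_self_pos (a : Fin 3 → ℝ) (h : a ≠ 0) : 0 < a ⬝ᵥ a := by
  rcases (dot_self_nonneg3 a).lt_or_eq with h' | h'
  · exact h'
  · exfalso; apply h
    have h' := h'.symm
    simp [dotProduct, Fin.sum_univ_three] at h'
    funext j
    have h0 : a 0 = 0 := by nlinarith [sq_nonneg (a 0), sq_nonneg (a 1), sq_nonneg (a 2)]
    have h1 : a 1 = 0 := by nlinarith [sq_nonneg (a 0), sq_nonneg (a 1), sq_nonneg (a 2)]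
    have h2 : a 2 = 0 := by nlinarith [sq_nonneg (a 0), sq_nonneg (a 1), sq_nonneg (a 2)]
    fin_cases j <;> simpa

lemma cauchy3 (a b : Fin 3 → ℝ) : a ⬝ᵥ b ≤ enorm3 a * enorm3 b := by
  have h : (a ⬝ᵥ b)^2 ≤ (a ⬝ᵥ a) * (b ⬝ᵥ b) := by
    simp only [dotProduct, Fin.sum_univ_three]
    nlinarith [sq_nonneg (a 0 * b 1 - a 1 * b 0), sq_nonneg (a 0 * b 2 - a 2 * b 0),
      sq_nonneg (a 1 * b 2 - a 2 * b 1)]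
  calc a ⬝ᵥ b ≤ |a ⬝ᵥ b| := le_abs_self _
    _ = Real.sqrt ((a ⬝ᵥ b)^2) := (Real.sqrt_sq_eq_abs _).symm
    _ ≤ Real.sqrt ((a ⬝ᵥ a) * (b ⬝ᵥ b)) := Real.sqrt_le_sqrt h
    _ = enorm3 a * enorm3 b := by
        rw [Real.sqrt_mul (dot_self_nonneg3 a)]; rfl

lemma cross_dot_left (z₁ z₂ : Fin 3 → ℝ) : cross3 z₁ z₂ ⬝ᵥ z₁ = 0 := by
  simp [cross3, dotProduct, Fin.sum_univ_three]; ring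

lemma cross_dot_right (z₁ z₂ : Fin 3 → ℝ) : cross3 z₁ z₂ ⬝ᵥ z₂ = 0 := by
  simp [cross3, dotProduct, Fin.sum_univ_three]; ring

lemma cross_dot_self (z₁ z₂ : Fin 3 → ℝ) :
    cross3 z₁ z₂ ⬝ᵥ cross3 z₁ z₂ = (z₁ ⬝ᵥ z₁) * (z₂ ⬝ᵥ z₂) - (z₁ ⬝ᵥ z₂)^2 := by
  simp [cross3, dotProduct, Fin.sum_univ_three]; ring

lemma gram_det3 (z₁ z₂ v : Fin 3 → ℝ) :
    (cross3 z₁ z₂ ⬝ᵥ v)^2 = (z₁ ⬝ᵥ z₁) * (z₂ ⬝ᵥ z₂) * (v ⬝ᵥ v)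
      + 2 * (z₁ ⬝ᵥ z₂) * (z₁ ⬝ᵥ v) * (z₂ ⬝ᵥ v)
      - (z₁ ⬝ᵥ z₁) * (z₂ ⬝ᵥ v)^2 - (z₂ ⬝ᵥ z₂) * (z₁ ⬝ᵥ v)^2
      - (z₁ ⬝ᵥ z₂)^2 * (v ⬝ᵥ v) := by
  simp [cross3, dotProduct, Fin.sum_univ_three]; ring

lemma vecMulVec_mulVec3 (a b v : Fin 3 → ℝ) : (vecMulVec a b).mulVec v = (b ⬝ᵥ v) • a := by
  funext j
  simp [vecMulVec, mulVec, dotProduct, Fin.sum_univ_three]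
  ring

lemma rot_dot_self (z₁ z₂ v : Fin 3 → ℝ) (h1 : z₁ ⬝ᵥ z₁ = 1) (h2 : z₂ ⬝ᵥ z₂ = 1)
    (hne' : z₁ ≠ -z₂) :
    rotApply z₁ z₂ v ⬝ᵥ rotApply z₁ z₂ v = v ⬝ᵥ v := by
  rcases eq_or_ne z₁ z₂ with h | hne
  · simp [rotApply, h]
  rw [rotApply, if_neg hne]
  set c := z₁ ⬝ᵥ z₂ with hc
  set cr := cross3 z₁ z₂ with hcr
  have hsub : z₁ - z₂ ≠ 0 := sub_ne_zero.mpr hne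
  have hadd : z₁ + z₂ ≠ 0 := by
    intro h'; exact hne' (eq_neg_of_add_eq_zero_left h')
  have hclt : c < 1 := by
    have := dot_self_pos _ hsub
    have he : (z₁ - z₂) ⬝ᵥ (z₁ - z₂) = 2 - 2*c := by
      simp only [sub_dotProduct, dotProduct_sub]
      rw [dotProduct_comm z₂ z₁] at *
      linarith [h1, h2]
    linarith [he ▸ this]
  have hcgt : -1 < c := by
    have := dot_self_pos _ hadd
    have he : (z₁ + z₂) ⬝ᵥ (z₁ + z₂) = 2 + 2*c := by
      simp only [add_dotProduct, dotProduct_add]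
      rw [dotProduct_comm z₂ z₁] at *
      linarith [h1, h2]
    linarith [he ▸ this]
  have hD : cr ⬝ᵥ cr = 1 - c^2 := by rw [hcr, cross_dot_self, h1, h2]; ring
  have hDpos : (0:ℝ) < 1 - c^2 := by nlinarith
  have hs : enorm3 cr ^ 2 = 1 - c^2 := by rw [enorm3_sq, hD]
  have hspos : 0 < enorm3 cr := by
    have := Real.sqrt_nonneg (cr ⬝ᵥ cr)
    rcases this.lt_or_eq with h' | h'
    · exact h'
    · exfalso; rw [enorm3] at hs; nlinarith [hs, h'.symm]
  have hinv : (enorm3 cr)⁻¹ * (enorm3 cr)⁻¹ = (1 - c^2)⁻¹ := by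
    rw [← mul_inv]; congr 1; nlinarith [hs]
  have hRv : (rotMatrix z₁ z₂).mulVec v
      = c • v + (z₁ ⬝ᵥ v) • z₂ - (z₂ ⬝ᵥ v) • z₁
        + ((1 - c) * ((1 - c^2)⁻¹ * (cr ⬝ᵥ v))) • cr := by
    rw [rotMatrix]
    rw [add_mulVec, sub_mulVec, add_mulVec, smul_mulVec, one_mulVec,
      smul_mulVec, vecMulVec_mulVec3, vecMulVec_mulVec3, vecMulVec_mulVec3]
    rw [uvec3, ← hcr]
    congr 1
    simp only [smul_dotProduct, smul_eq_mul, smul_smul]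
    congr 1
    linear_combination (1 - c) * (cr ⬝ᵥ v) * hinv
  rw [hRv]
  set a := z₁ ⬝ᵥ v
  set b := z₂ ⬝ᵥ v
  set w := cr ⬝ᵥ v with hw
  set T := (1 - c) * ((1 - c^2)⁻¹ * w) with hT
  have hgram : w^2 = v ⬝ᵥ v + 2*c*a*b - b^2 - a^2 - c^2 * (v ⬝ᵥ v) := by
    rw [hw, hcr, gram_det3, h1, h2]; ring
  have expand : (c • v + a • z₂ - b • z₁ + T • cr) ⬝ᵥ (c • v + a • z₂ - b • z₁ + T • cr)
      = c^2 * (v ⬝ᵥ v) + a^2 + b^2 - 2*a*b*c + 2*c*T*w + T^2 * (1 - c^2) := by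
    simp only [add_dotProduct, dotProduct_add, sub_dotProduct, dotProduct_sub,
      smul_dotProduct, dotProduct_smul, smul_eq_mul]
    have e1 : cr ⬝ᵥ z₁ = 0 := by rw [hcr]; exact cross_dot_left _ _
    have e2 : cr ⬝ᵥ z₂ = 0 := by rw [hcr]; exact cross_dot_right _ _
    have e3 : z₁ ⬝ᵥ cr = 0 := by rw [dotProduct_comm]; exact e1
    have e4 : z₂ ⬝ᵥ cr = 0 := by rw [dotProduct_comm]; exact e2
    have e5 : z₂ ⬝ᵥ z₁ = c := by rw [dotProduct_comm]
    have e6 : v ⬝ᵥ z₁ = a := by rw [dotProduct_comm]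
    have e7 : v ⬝ᵥ z₂ = b := by rw [dotProduct_comm]
    have e8 : v ⬝ᵥ cr = w := by rw [dotProduct_comm]
    rw [e1, e2, e3, e4, e5, e6, e7, e8, h1, h2, hD]
    ring
  rw [expand]
  have hne0 : (1 - c^2) ≠ 0 := ne_of_gt hDpos
  have key : 2*c*T*w + T^2 * (1 - c^2) = w^2 := by
    rw [hT]; field_simp; ring
  linear_combination key + hgram

lemma rot_dot_le (z₁ z₂ u w : Fin 3 → ℝ) (h1 : z₁ ⬝ᵥ z₁ = 1) (h2 : z₂ ⬝ᵥ z₂ = 1)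
    (hne' : z₁ ≠ -z₂) :
    rotApply z₁ z₂ u ⬝ᵥ w ≤ enorm3 u * enorm3 w := by
  have h := cauchy3 (rotApply z₁ z₂ u) w
  rwa [show enorm3 (rotApply z₁ z₂ u) = enorm3 u from by
    rw [enorm3, enorm3, rot_dot_self _ _ _ h1 h2 hne']] at h

lemma perk (ψm w σ m n d p q t : ℝ) (hψm : 0 < ψm) (hw : ψm ≤ w) (hσ : 0 < σ)
    (ht : 0 < t) (hm : 0 ≤ m) (hd : 0 ≤ d)
    (hp : p ≤ n * m) (hq : q ≤ d * m) (hnm : n ≤ m) :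
    2 * (w * t) * (p - m^2) + 2 * σ * t * q
      ≤ ψm * t * n^2 - ψm / 2 * m^2 * t + 2 * σ^2 / ψm * t * d^2 := by
  have core : 2 * w * (p - m^2) + 2 * σ * q
      ≤ ψm * n^2 - ψm / 2 * m^2 + 2 * σ^2 / ψm * d^2 := by
    have h1 : p - m^2 ≤ n*m - m^2 := by linarith
    have h2 : n*m - m^2 ≤ 0 := by nlinarith
    have h3 : w * (p - m^2) ≤ ψm * (n*m - m^2) := by nlinarith
    have h4 : 2*(n*m - m^2) ≤ n^2 - m^2 := by nlinarith [sq_nonneg (n - m)]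
    have h5 : 2 * σ * q ≤ 2 * σ * (d * m) := by nlinarith
    have h6 : 2 * σ * (d * m) ≤ ψm / 2 * m^2 + 2 * σ^2 / ψm * d^2 := by
      have hdiv : 2 * σ^2 / ψm * ψm = 2 * σ^2 := by field_simp
      nlinarith [sq_nonneg (ψm * m - 2 * σ * d), mul_pos hψm hψm]
    nlinarith
  nlinarith [mul_le_mul_of_nonneg_right core ht.le]

/-- Differential inequality for the maximal velocity: if `‖v_i‖` is
maximal and `ψ_{ik} ≥ ψ_m > 0` for all `k`, then
`2 Σ_k (ψ_{ik}/N)(⟨R_{x_k→x_i}(v_k), v_i⟩ − ‖v_i‖²) + (2σ/N) Σ_k ⟨x_k − x_i, v_i⟩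
  ≤ ψ_m (1/N) Σ_k ‖v_k‖² − (ψ_m/2)‖v_i‖² + (2σ²/ψ_m)(1/N) Σ_k ‖x_k − x_i‖²`. -/
theorem maximal_velocity_estimate (N : ℕ) (hN : 1 ≤ N)
    (σ ψm : ℝ) (hσ : 0 < σ) (hψm : 0 < ψm)
    (x v : Fin N → Fin 3 → ℝ)
    (hx : ∀ a, enorm3 (x a) = 1) (hanti : ∀ a b, x a ≠ -(x b))
    (i : Fin N) (hi : ∀ k, enorm3 (v k) ≤ enorm3 (v i))
    (ψw : Fin N → ℝ) (hψw0 : ∀ k, 0 ≤ ψw k) (hψwm : ∀ k, ψm ≤ ψw k) :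
    2 * ∑ k, ψw k / N * ((rotApply (x k) (x i) (v k)) ⬝ᵥ (v i) - (enorm3 (v i))^2)
      + 2 * σ / N * ∑ k, ((x k - x i) ⬝ᵥ (v i))
    ≤ ψm * ((N : ℝ)⁻¹ * ∑ k, (enorm3 (v k))^2) - ψm / 2 * (enorm3 (v i))^2
      + 2 * σ^2 / ψm * ((N : ℝ)⁻¹ * ∑ k, (enorm3 (x k - x i))^2) := by
  have hNR : (0:ℝ) < N := by exact_mod_cast Nat.lt_of_lt_of_le Nat.zero_lt_one hN
  set t : ℝ := (N : ℝ)⁻¹ with htdef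
  have ht : 0 < t := inv_pos.mpr hNR
  have hNt : (N:ℝ) * t = 1 := mul_inv_cancel₀ (ne_of_gt hNR)
  set m := enorm3 (v i) with hm
  have hxdot : ∀ a : Fin N, x a ⬝ᵥ x a = 1 := by
    intro a
    have := enorm3_sq (x a)
    rw [hx a] at this
    linarith [this]
  have hL : 2 * ∑ k, ψw k / N * ((rotApply (x k) (x i) (v k)) ⬝ᵥ (v i) - m^2)
      + 2 * σ / N * ∑ k, ((x k - x i) ⬝ᵥ (v i))
      = ∑ k, (2 * (ψw k * t) * ((rotApply (x k) (x i) (v k)) ⬝ᵥ (v i) - m^2)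
          + 2 * σ * t * ((x k - x i) ⬝ᵥ (v i))) := by
    rw [Finset.mul_sum, Finset.mul_sum, ← Finset.sum_add_distrib]
    exact Finset.sum_congr rfl fun k _ => by
      rw [htdef]; field_simp
  have s1 : ψm * (t * ∑ k, (enorm3 (v k))^2) = ∑ k, ψm * t * (enorm3 (v k))^2 := by
    rw [Finset.mul_sum, Finset.mul_sum]
    exact Finset.sum_congr rfl fun k _ => by ring
  have s3 : 2 * σ^2 / ψm * (t * ∑ k, (enorm3 (x k - x i))^2)
      = ∑ k, 2 * σ^2 / ψm * t * (enorm3 (x k - x i))^2 := by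
    rw [Finset.mul_sum, Finset.mul_sum]
    exact Finset.sum_congr rfl fun k _ => by ring
  have s2 : ∑ _k : Fin N, ψm / 2 * m^2 * t = ψm / 2 * m^2 := by
    rw [Finset.sum_const, Finset.card_univ, Fintype.card_fin, nsmul_eq_mul]
    linear_combination (ψm / 2 * m^2) * hNt
  have hR : ψm * (t * ∑ k, (enorm3 (v k))^2) - ψm / 2 * m^2
      + 2 * σ^2 / ψm * (t * ∑ k, (enorm3 (x k - x i))^2)
      = ∑ k, (ψm * t * (enorm3 (v k))^2 - ψm / 2 * m^2 * t
          + 2 * σ^2 / ψm * t * (enorm3 (x k - x i))^2) := by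
    rw [Finset.sum_add_distrib, Finset.sum_sub_distrib, s1, s3, s2]
  rw [hL, hR]
  apply Finset.sum_le_sum
  intro k _
  exact perk ψm (ψw k) σ m (enorm3 (v k)) (enorm3 (x k - x i))
    ((rotApply (x k) (x i) (v k)) ⬝ᵥ (v i)) ((x k - x i) ⬝ᵥ (v i)) t
    hψm (hψwm k) hσ ht (enorm3_nonneg _) (enorm3_nonneg _)
    (rot_dot_le _ _ _ _ (hxdot k) (hxdot i) (hanti k i))
    (cauchy3 _ _) (hi k)
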